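/- The centre-point property is expressible in GMSC: the program with rules X(0) :− □⊥ and X :− ◇X ∧ □X, with X appointed, accepts a pointed finite directed graph (G, w) if and only if there exists n ∈ ℕ such that every directed path starting from w reaches a node with no out-neighbours in exactly n steps. -/

import Mathlib

/-- A finite directed node-labeled graph: finite node set `V`, out-neighbour
finsets `adj v`, and a labeling of nodes by sets of node label symbols from `α`. -/
structure LGraph (α : Type) : Type 1 where
  V : Type
  fintypeV : Fintype V
  adj : V → Finset V
  label : V → Set α

attribute [instance] LGraph.fintypeV

/-- Formulas of graded modal logic GML over node label symbols `α`:
`⊤`, labels, negation, conjunction, and graded diamonds `◇_{≥k}`. -/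
inductive GML (α : Type) : Type where
  | top : GML α
  | lab : α → GML α
  | neg : GML α → GML α
  | and : GML α → GML α → GML α
  | dia : ℕ → GML α → GML α

/-- Truth of a GML formula at a node of a labeled graph; `dia k φ` (`◇_{≥k}φ`)
holds iff at least `k` out-neighbours satisfy `φ`. -/
def GML.sat {α : Type} (G : LGraph α) : GML α → G.V → Prop
  | .top, _ => True
  | .lab p, v => p ∈ G.label v
  | .neg φ, v => ¬ GML.sat G φ v
  | .and φ ψ, v => GML.sat G φ v ∧ GML.sat G ψ v
  | .dia k φ, v => ∃ s : Finset G.V, s ⊆ G.adj v ∧ k ≤ s.card ∧ ∀ u ∈ s, GML.sat G φ u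

/-- `⊥` as a GML formula. -/
def GML.bot {α : Type} : GML α := .neg .top

/-- `□φ := ¬◇_{≥1}¬φ`. -/
def GML.box {α : Type} (φ : GML α) : GML α := .neg (.dia 1 (.neg φ))

/-- `◇_{=n}φ := ◇_{≥n}φ ∧ ¬◇_{≥n+1}φ`. -/
def GML.diaEq {α : Type} (n : ℕ) (φ : GML α) : GML α := .and (.dia n φ) (.neg (.dia (n + 1) φ))

/-- Schemata of GMSC over node label symbols `α` and head predicates (schema variables) `ν`. -/
inductive Schema (α ν : Type) : Type where
  | top : Schema α ν
  | lab : α → Schema α ν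
  | var : ν → Schema α ν
  | neg : Schema α ν → Schema α ν
  | and : Schema α ν → Schema α ν → Schema α ν
  | dia : ℕ → Schema α ν → Schema α ν

/-- Substituting a GML formula for each head predicate of a schema. -/
def Schema.subst {α ν : Type} (σ : ν → GML α) : Schema α ν → GML α
  | .top => .top
  | .lab p => .lab p
  | .var X => σ X
  | .neg φ => .neg (φ.subst σ)
  | .and φ ψ => .and (φ.subst σ) (ψ.subst σ)
  | .dia k φ => .dia k (φ.subst σ)

/-- A GMSC program over node label symbols `α` with head predicates `ν`:
terminal clauses `X(0) :− term X`, iteration clauses `X :− iter X`, and a set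
`app` of appointed predicates. -/
structure Program (α ν : Type) where
  term : ν → GML α
  iter : ν → Schema α ν
  app : Set ν

/-- The `n`-th iteration formula `Xⁿ` of a head predicate `X`: `X⁰` is the terminal body,
and `X^{n+1}` is the iteration body with each head predicate `Y` replaced by `Yⁿ`. -/
def Program.iterFormula {α ν : Type} (P : Program α ν) : ℕ → ν → GML α
  | 0 => P.term
  | n + 1 => fun X => (P.iter X).subst (P.iterFormula n)

/-- The program accepts `(G, w)` iff some appointed predicate's iteration formula is
true at `w` in some round. -/
def Program.accepts {α ν : Type} (P : Program α ν) (G : LGraph α) (w : G.V) : Prop :=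
  ∃ X ∈ P.app, ∃ n : ℕ, GML.sat G (P.iterFormula n X) w

/-- `□φ` for schemata. -/
def Schema.box {α ν : Type} (φ : Schema α ν) : Schema α ν := .neg (.dia 1 (.neg φ))

/-- The GMSC program with a single head predicate `X`, rules `X(0) :− □⊥` and
`X :− ◇X ∧ □X`, with `X` appointed. -/
def centreProg (α : Type) : Program α Unit where
  term := fun _ => GML.box GML.bot
  iter := fun _ => Schema.and (Schema.dia 1 (Schema.var ())) (Schema.box (Schema.var ()))
  app := Set.univ

/-- The centre-point property is expressed by the GMSC program
`X(0) :− □⊥`, `X :− ◇X ∧ □X` (with `X` appointed): the program accepts a pointed finite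
directed graph `(G, w)` iff there is `n ∈ ℕ` such that every directed walk starting at `w`
reaches a node with no out-neighbours exactly when it has length `n`. -/
lemma dia1_sat {α : Type} (G : LGraph α) (φ : GML α) (v : G.V) :
    GML.sat G (.dia 1 φ) v ↔ ∃ u ∈ G.adj v, GML.sat G φ u := by
  constructor
  · rintro ⟨s, hs, hc, h⟩
    obtain ⟨u, hu⟩ := Finset.card_pos.mp hc
    exact ⟨u, hs hu, h u hu⟩
  · rintro ⟨u, hu, h⟩
    exact ⟨{u}, Finset.singleton_subset_iff.mpr hu, by simp, by simpa⟩

lemma box_sat {α : Type} (G : LGraph α) (φ : GML α) (v : G.V) :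
    GML.sat G (GML.box φ) v ↔ ∀ u ∈ G.adj v, GML.sat G φ u := by
  unfold GML.box
  rw [show GML.sat G (.neg (.dia 1 (.neg φ))) v = ¬ GML.sat G (.dia 1 (.neg φ)) v from rfl,
    dia1_sat]
  push_neg
  simp [GML.sat]

lemma getLastD_cons' {β : Type} (a v : β) (l : List β) :
    (a :: l).getLastD v = l.getLastD a := by
  cases l <;> rfl

lemma centre_key {α : Type} (G : LGraph α) (n : ℕ) (v : G.V) :
    GML.sat G ((centreProg α).iterFormula n ()) v ↔
      ∀ l : List G.V, List.Chain (fun a b => b ∈ G.adj a) v l →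
        (G.adj (l.getLastD v) = ∅ ↔ l.length = n) := by
  induction n generalizing v with
  | zero =>
    have h0 : GML.sat G ((centreProg α).iterFormula 0 ()) v ↔ G.adj v = ∅ := by
      rw [show (centreProg α).iterFormula 0 () = GML.box GML.bot from rfl, box_sat]
      constructor
      · intro h
        by_contra hne
        obtain ⟨u, hu⟩ := Finset.nonempty_iff_ne_empty.mpr hne
        exact h u hu trivial
      · intro h u hu _
        simp [h] at hu
    rw [h0]
    constructor
    · intro h l hl
      cases l with
      | nil => simpa using h
      | cons u l' =>
        replace hl := List.chain_cons.mp hl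
        simp [h] at hl
    · intro h
      have := h [] (List.Chain.nil)
      simpa using this
  | succ n ih =>
    have hs : GML.sat G ((centreProg α).iterFormula (n+1) ()) v ↔
        (∃ u ∈ G.adj v, GML.sat G ((centreProg α).iterFormula n ()) u) ∧
        (∀ u ∈ G.adj v, GML.sat G ((centreProg α).iterFormula n ()) u) := by
      rw [show (centreProg α).iterFormula (n+1) ()
          = GML.and (GML.dia 1 ((centreProg α).iterFormula n ()))
              (GML.box ((centreProg α).iterFormula n ())) from rfl]
      rw [show GML.sat G (GML.and (GML.dia 1 ((centreProg α).iterFormula n ()))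
              (GML.box ((centreProg α).iterFormula n ()))) v
          ↔ GML.sat G (GML.dia 1 ((centreProg α).iterFormula n ())) v ∧
            GML.sat G (GML.box ((centreProg α).iterFormula n ())) v from Iff.rfl]
      rw [dia1_sat, box_sat]
    rw [hs]
    constructor
    · rintro ⟨⟨u, hu, _⟩, hall⟩ l hl
      cases l with
      | nil =>
        simp only [List.getLastD, List.length_nil]
        constructor
        · intro h; rw [h] at hu; simp at hu
        · intro h; omega
      | cons a l' =>
        replace hl := List.chain_cons.mp hl
        have := (ih a).mp (hall a hl.1) l' hl.2
        rw [getLastD_cons', List.length_cons, this]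
        omega
    · intro h
      have hne : (G.adj v).Nonempty := by
        by_contra hemp
        rw [Finset.not_nonempty_iff_eq_empty] at hemp
        have := (h [] List.Chain.nil).mp (by simpa using hemp)
        simp at this
      refine ⟨⟨hne.choose, hne.choose_spec, ?_⟩, fun u hu => ?_⟩
      · refine (ih hne.choose).mpr fun l hl => ?_
        have := h (hne.choose :: l) (List.chain_cons.mpr ⟨hne.choose_spec, hl⟩)
        rw [getLastD_cons', List.length_cons] at this
        rw [this]; omega
      · refine (ih u).mpr fun l hl => ?_
        have := h (u :: l) (List.chain_cons.mpr ⟨hu, hl⟩)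
        rw [getLastD_cons', List.length_cons] at this
        rw [this]; omega

theorem centre_point_property (α : Type) (G : LGraph α) (w : G.V) :
    (centreProg α).accepts G w ↔
      ∃ n : ℕ, ∀ l : List G.V, List.Chain (fun a b => b ∈ G.adj a) w l →
        (G.adj (l.getLastD w) = ∅ ↔ l.length = n) := by
  unfold Program.accepts
  constructor
  · rintro ⟨X, -, n, h⟩
    exact ⟨n, (centre_key G n w).mp h⟩
  · rintro ⟨n, h⟩
    exact ⟨(), Set.mem_univ _, n, (centre_key G n w).mpr h⟩
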